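/- For μ > 0, the function I_F(p,α) = p·2μ + (1−p)·10μ − 4μ·cos(α)·√(2p(1−p)) (the Fisher information of the superposition √p·ψ_0 + e^{iα}√(1−p)·ψ_2) attains its minimum over p ∈ [0,1] and α ∈ ℝ at α = 0 and p = 1/2 + 1/√6, and the minimum value is (6 − 2√6)·μ. -/
import Mathlib


open Real

theorem stmt_9 (μ : ℝ) (hμ : 0 < μ) :
    (∀ p ∈ Set.Icc (0 : ℝ) 1, ∀ α : ℝ,
        (1 / 2 + 1 / Real.sqrt 6) * (2 * μ) + (1 - (1 / 2 + 1 / Real.sqrt 6)) * (10 * μ)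
            - 4 * μ * Real.cos 0 *
                Real.sqrt (2 * (1 / 2 + 1 / Real.sqrt 6) * (1 - (1 / 2 + 1 / Real.sqrt 6)))
          ≤ p * (2 * μ) + (1 - p) * (10 * μ)
              - 4 * μ * Real.cos α * Real.sqrt (2 * p * (1 - p)))
    ∧ (1 / 2 + 1 / Real.sqrt 6) * (2 * μ) + (1 - (1 / 2 + 1 / Real.sqrt 6)) * (10 * μ)
          - 4 * μ * Real.cos 0 *
              Real.sqrt (2 * (1 / 2 + 1 / Real.sqrt 6) * (1 - (1 / 2 + 1 / Real.sqrt 6)))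
        = (6 - 2 * Real.sqrt 6) * μ := by
  have h6 : Real.sqrt 6 ^ 2 = 6 := Real.sq_sqrt (by norm_num)
  have h6pos : (0:ℝ) < Real.sqrt 6 := Real.sqrt_pos.mpr (by norm_num)
  have hinv : 1 / Real.sqrt 6 = Real.sqrt 6 / 6 := by
    rw [div_eq_div_iff h6pos.ne' (by norm_num : (6:ℝ) ≠ 0)]
    nlinarith
  have hval : Real.sqrt (2 * (1/2 + 1/Real.sqrt 6) * (1 - (1/2 + 1/Real.sqrt 6)))
      = Real.sqrt 6 / 6 := by
    have h1 : 2 * (1/2 + 1/Real.sqrt 6) * (1 - (1/2 + 1/Real.sqrt 6))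
        = (Real.sqrt 6 / 6)^2 := by
      rw [hinv]; field_simp; nlinarith
    rw [h1, Real.sqrt_sq (by positivity)]
  have hcos0 : Real.cos 0 = 1 := Real.cos_zero
  constructor
  · intro p hp α
    obtain ⟨hp0, hp1⟩ := hp
    set s := Real.sqrt (2*p*(1-p)) with hs
    have hsnn : 0 ≤ s := Real.sqrt_nonneg _
    have hs2 : s^2 = 2*p*(1-p) := Real.sq_sqrt (by nlinarith)
    have hcos : Real.cos α ≤ 1 := Real.cos_le_one α
    have key : 4*(p - 1/2) + 2*s ≤ Real.sqrt 6 := by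
      have h1 : (4*(p-1/2)+2*s)^2 ≤ 6 := by nlinarith [sq_nonneg ((p-1/2) - s)]
      calc 4*(p-1/2)+2*s ≤ |4*(p-1/2)+2*s| := le_abs_self _
        _ = Real.sqrt ((4*(p-1/2)+2*s)^2) := (Real.sqrt_sq_eq_abs _).symm
        _ ≤ Real.sqrt 6 := Real.sqrt_le_sqrt h1
    rw [hval, hcos0, hinv]
    have hcs : 4*μ*Real.cos α * s ≤ 4*μ*s := by nlinarith [mul_nonneg (mul_nonneg hμ.le hsnn) (sub_nonneg.mpr hcos)]
    nlinarith [key, mul_le_mul_of_nonneg_left key (le_of_lt hμ)]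
  · rw [hval, hcos0, hinv]
    nlinarith
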